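/- arXiv:2512.02957 — 3 statements merged into one kernel-verified Lean document; each statement's English description precedes it below -/
import Mathlib

section
/- Let m ≥ 2 and define, for fixed i and k = 1,…,m−1, the vectors obtained by Gram–Schmidt orthonormalization of the sequence ((e_i + e_{i⊕1})/√2, (e_i + e_{i⊕2})/√2, …, (e_i + e_{i⊕(m−1)})/√2), where ⊕ denotes addition modulo m on indices {1,…,m}. Then the k-th orthonormalized vector equals a_{ik} = α_k (e_i − Σ_{j=1}^{k−1} e_{i⊕j}) + β_k e_{i⊕k}, with α_k = 1/√(k + k²) and β_k = √(k/(k+1)). -/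
open Finset Submodule RealInnerProductSpace
open Fin.NatCast
open InnerProductSpace

/-- Canonical basis vector of `EuclideanSpace ℝ (Fin m)`. -/
noncomputable def canE (m : ℕ) (i : Fin m) : EuclideanSpace ℝ (Fin m) :=
  EuclideanSpace.single i 1

instance (n : ℕ) : WellFoundedLT (Fin n) := ⟨Finite.wellFounded_of_trans_of_irrefl _⟩

lemma inner_canE (m : ℕ) (a b : Fin m) :
    ⟪canE m a, canE m b⟫ = if a = b then 1 else 0 := by
  simp [canE, EuclideanSpace.inner_single_left, EuclideanSpace.single_apply, eq_comm]

lemma shift_inj (m : ℕ) [NeZero m] (i : Fin m) {a b : ℕ} (ha : a < m) (hb : b < m) :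
    i + (a : Fin m) = i + (b : Fin m) ↔ a = b := by
  constructor
  · intro h
    have h2 : (a : Fin m) = (b : Fin m) := by
      have := congrArg (fun x => x - i) h
      simpa [add_comm, add_sub_cancel_right] using this
    have := congrArg Fin.val h2
    simpa [Fin.val_natCast, Nat.mod_eq_of_lt ha, Nat.mod_eq_of_lt hb] using this
  · rintro rfl; rfl

lemma inner_shift (m : ℕ) [NeZero m] (i : Fin m) {a b : ℕ} (ha : a < m) (hb : b < m) :
    ⟪canE m (i + (a : Fin m)), canE m (i + (b : Fin m))⟫ = if a = b then 1 else 0 := by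
  rw [inner_canE]
  simp [shift_inj m i ha hb]

lemma inner_e_shift (m : ℕ) [NeZero m] (i : Fin m) {a : ℕ} (h0 : 0 < a) (ha : a < m) :
    ⟪canE m i, canE m (i + (a : Fin m))⟫ = 0 := by
  have h := inner_shift m i (a := 0) (b := a) (NeZero.pos m) ha
  simpa [h0.ne'.symm] using h

lemma inner_shift_e (m : ℕ) [NeZero m] (i : Fin m) {a : ℕ} (h0 : 0 < a) (ha : a < m) :
    ⟪canE m (i + (a : Fin m)), canE m i⟫ = 0 := by
  rw [real_inner_comm]; exact inner_e_shift m i h0 ha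

lemma inner_e_e (m : ℕ) (i : Fin m) : ⟪canE m i, canE m i⟫ = 1 := by
  rw [inner_canE]; simp

lemma sum_Iio_fin {n : ℕ} (k : Fin n) {M : Type*} [AddCommMonoid M] (G : ℕ → M) :
    ∑ j ∈ Finset.Iio k, G (j : ℕ) = ∑ t ∈ Finset.range (k : ℕ), G t := by
  haveI : NeZero n := ⟨Nat.pos_iff_ne_zero.mp k.pos⟩
  have h2 : (Finset.Ico (⊥ : Fin n) k).map Fin.valEmbedding = Finset.range (k : ℕ) := by
    rw [Fin.map_valEmbedding_Ico, Finset.range_eq_Ico]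
    congr 1
  calc ∑ j ∈ Finset.Iio k, G (j : ℕ)
      = ∑ x ∈ (Finset.Ico (⊥ : Fin n) k).map Fin.valEmbedding, G x := by
        rw [Finset.sum_map]; exact Finset.sum_congr (by ext x; simp) (fun _ _ => rfl)
    _ = ∑ t ∈ Finset.range (k : ℕ), G t := by rw [h2]

lemma mem_orthogonal_span' {E : Type*} [NormedAddCommGroup E] [InnerProductSpace ℝ E]
    {s : Set E} {v : E} (h : ∀ u ∈ s, ⟪u, v⟫ = 0) : v ∈ (span ℝ s)ᗮ := by
  rw [Submodule.mem_orthogonal]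
  intro u hu
  induction hu using Submodule.span_induction with
  | mem x hx => exact h x hx
  | zero => simp
  | add x y _ _ hx hy => simp [inner_add_left, hx, hy]
  | smul a x _ hx => simp [inner_smul_left, hx]

lemma innerW (m : ℕ) [NeZero m] (i : Fin m) (K : ℕ) (hK : K + 1 < m) {j : ℕ} (hj : j < K) :
    ⟪canE m i + canE m (i + ((j + 1 : ℕ) : Fin m)),
      canE m i - (∑ t ∈ Finset.range K, canE m (i + ((t + 1 : ℕ) : Fin m))) +
        ((K : ℝ) + 1) • canE m (i + ((K + 1 : ℕ) : Fin m))⟫ = 0 := by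
  have hs1 : ∑ t ∈ Finset.range K, ⟪canE m i, canE m (i + ((t + 1 : ℕ) : Fin m))⟫ = 0 :=
    Finset.sum_eq_zero fun t ht => inner_e_shift m i (by omega)
      (by have := Finset.mem_range.mp ht; omega)
  have hs2 : ∑ t ∈ Finset.range K,
      ⟪canE m (i + ((j + 1 : ℕ) : Fin m)), canE m (i + ((t + 1 : ℕ) : Fin m))⟫ = 1 := by
    rw [Finset.sum_eq_single_of_mem j (Finset.mem_range.mpr hj)]
    · rw [inner_shift m i (by omega) (by omega)]; simp
    · intro t ht htj
      rw [inner_shift m i (by omega) (by have := Finset.mem_range.mp ht; omega),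
        if_neg (by omega)]
  have h3 : ⟪canE m i, canE m (i + ((K + 1 : ℕ) : Fin m))⟫ = 0 :=
    inner_e_shift m i (by omega) (by omega)
  have h4 : ⟪canE m (i + ((j + 1 : ℕ) : Fin m)), canE m i⟫ = 0 :=
    inner_shift_e m i (by omega) (by omega)
  have h5 : ⟪canE m (i + ((j + 1 : ℕ) : Fin m)), canE m (i + ((K + 1 : ℕ) : Fin m))⟫ = 0 := by
    rw [inner_shift m i (by omega) (by omega), if_neg (by omega)]
  simp only [inner_add_left, inner_add_right, inner_sub_right, real_inner_smul_right, inner_sum,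
    Finset.sum_add_distrib, Finset.sum_sub_distrib, ← Finset.mul_sum,
    inner_e_e, hs1, hs2, h3, h4, h5]
  ring

lemma innerWW (m : ℕ) [NeZero m] (i : Fin m) (K : ℕ) (hK : K + 1 < m) :
    ⟪canE m i - (∑ t ∈ Finset.range K, canE m (i + ((t + 1 : ℕ) : Fin m))) +
        ((K : ℝ) + 1) • canE m (i + ((K + 1 : ℕ) : Fin m)),
      canE m i - (∑ t ∈ Finset.range K, canE m (i + ((t + 1 : ℕ) : Fin m))) +
        ((K : ℝ) + 1) • canE m (i + ((K + 1 : ℕ) : Fin m))⟫ = ((K : ℝ) + 1) * ((K : ℝ) + 2) := by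
  have hs1 : ∑ t ∈ Finset.range K, ⟪canE m i, canE m (i + ((t + 1 : ℕ) : Fin m))⟫ = 0 :=
    Finset.sum_eq_zero fun t ht => inner_e_shift m i (by omega)
      (by have := Finset.mem_range.mp ht; omega)
  have hs1' : ∑ t ∈ Finset.range K, ⟪canE m (i + ((t + 1 : ℕ) : Fin m)), canE m i⟫ = 0 :=
    Finset.sum_eq_zero fun t ht => inner_shift_e m i (by omega)
      (by have := Finset.mem_range.mp ht; omega)
  have hs2 : ∑ t ∈ Finset.range K, ∑ u ∈ Finset.range K,
      ⟪canE m (i + ((t + 1 : ℕ) : Fin m)), canE m (i + ((u + 1 : ℕ) : Fin m))⟫ = K := by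
    have : ∀ t ∈ Finset.range K, (∑ u ∈ Finset.range K,
        ⟪canE m (i + ((t + 1 : ℕ) : Fin m)), canE m (i + ((u + 1 : ℕ) : Fin m))⟫) = 1 := by
      intro t ht
      have htK := Finset.mem_range.mp ht
      rw [Finset.sum_eq_single_of_mem t ht]
      · rw [inner_shift m i (by omega) (by omega)]; simp
      · intro u hu hut
        rw [inner_shift m i (by omega) (by have := Finset.mem_range.mp hu; omega),
          if_neg (by omega)]
    rw [Finset.sum_congr rfl this]
    simp
  have hs3 : ∑ t ∈ Finset.range K,
      ⟪canE m (i + ((t + 1 : ℕ) : Fin m)), canE m (i + ((K + 1 : ℕ) : Fin m))⟫ = 0 := by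
    refine Finset.sum_eq_zero fun t ht => ?_
    have htK := Finset.mem_range.mp ht
    rw [inner_shift m i (by omega) (by omega), if_neg (by omega)]
  have hs3' : ∑ t ∈ Finset.range K,
      ⟪canE m (i + ((K + 1 : ℕ) : Fin m)), canE m (i + ((t + 1 : ℕ) : Fin m))⟫ = 0 := by
    refine Finset.sum_eq_zero fun t ht => ?_
    have htK := Finset.mem_range.mp ht
    rw [inner_shift m i (by omega) (by omega), if_neg (by omega)]
  have h3 : ⟪canE m i, canE m (i + ((K + 1 : ℕ) : Fin m))⟫ = 0 :=
    inner_e_shift m i (by omega) (by omega)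
  have h4 : ⟪canE m (i + ((K + 1 : ℕ) : Fin m)), canE m i⟫ = 0 :=
    inner_shift_e m i (by omega) (by omega)
  have h6 : ⟪canE m (i + ((K + 1 : ℕ) : Fin m)), canE m (i + ((K + 1 : ℕ) : Fin m))⟫ = 1 := by
    rw [inner_shift m i (by omega) (by omega)]; simp
  have hs2' : ∑ t ∈ Finset.range K, ∑ u ∈ Finset.range K,
      ⟪canE m (i + ((u + 1 : ℕ) : Fin m)), canE m (i + ((t + 1 : ℕ) : Fin m))⟫ = K := by
    rw [Finset.sum_comm]; exact hs2
  simp only [inner_add_left, inner_add_right, inner_sub_left, inner_sub_right,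
    real_inner_smul_left, real_inner_smul_right, inner_sum, sum_inner,
    Finset.sum_add_distrib, Finset.sum_sub_distrib, ← Finset.mul_sum,
    inner_e_e, hs1, hs1', hs2, hs2', hs3, hs3', h3, h4, h6]
  ring


/-- Gram–Schmidt orthonormalization of the vectors `(e_i + e_{i⊕k})/√2`, `k = 1,…,m−1`
(indices mod `m`), yields `a_{ik} = α_k (e_i − Σ_{j=1}^{k−1} e_{i⊕j}) + β_k e_{i⊕k}` with
`α_k = 1/√(k+k²)`, `β_k = √(k/(k+1))`. -/
theorem gramSchmidt_explicit_form (m : ℕ) [NeZero m] (hm : 2 ≤ m) (i : Fin m)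
    (f : Fin (m - 1) → EuclideanSpace ℝ (Fin m))
    (hf : ∀ k : Fin (m - 1),
      f k = (Real.sqrt 2)⁻¹ • (canE m i + canE m (i + (((k : ℕ) + 1 : ℕ) : Fin m))))
    (k : Fin (m - 1)) :
    InnerProductSpace.gramSchmidtNormed ℝ f k =
      (Real.sqrt (((k : ℕ) + 1) + ((k : ℕ) + 1) ^ 2))⁻¹ •
          (canE m i - ∑ j ∈ Finset.range (k : ℕ), canE m (i + ((j + 1 : ℕ) : Fin m)))
        + Real.sqrt ((((k : ℕ) + 1 : ℕ)) / (((k : ℕ) + 2 : ℕ))) •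
          canE m (i + (((k : ℕ) + 1 : ℕ) : Fin m)) := by
  have hK : (k : ℕ) + 1 < m := by have := k.isLt; omega
  set W : EuclideanSpace ℝ (Fin m) :=
    canE m i - (∑ j ∈ Finset.range (k : ℕ), canE m (i + ((j + 1 : ℕ) : Fin m))) +
      (((k : ℕ) : ℝ) + 1) • canE m (i + (((k : ℕ) + 1 : ℕ) : Fin m)) with hW
  set c : ℝ := ((((k : ℕ) : ℝ) + 1) * Real.sqrt 2)⁻¹ with hc
  have hsqrt2 : Real.sqrt 2 ≠ 0 := by positivity
  have hk1 : (((k : ℕ) : ℝ) + 1) ≠ 0 := by positivity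
  have hcpos : 0 < c := by rw [hc]; positivity
  have h1 : gramSchmidt ℝ f k ∈ (span ℝ (f '' Set.Iio k))ᗮ := by
    rw [← span_gramSchmidt_Iio ℝ f k]
    apply mem_orthogonal_span'
    rintro u ⟨j, hj, rfl⟩
    exact gramSchmidt_orthogonal ℝ f (ne_of_lt hj)
  have h2 : f k - gramSchmidt ℝ f k ∈ span ℝ (f '' Set.Iio k) := by
    rw [← span_gramSchmidt_Iio ℝ f k, gramSchmidt_def ℝ f k, sub_sub_cancel]
    refine Submodule.sum_mem _ fun j hj => ?_
    have hmem : (orthogonalProjection (ℝ ∙ gramSchmidt ℝ f j) (f k) :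
        EuclideanSpace ℝ (Fin m)) ∈ (ℝ ∙ gramSchmidt ℝ f j) := SetLike.coe_mem _
    refine Submodule.span_mono ?_ hmem
    exact Set.singleton_subset_iff.mpr ⟨j, Finset.mem_Iio.mp hj, rfl⟩
  have h3 : c • W ∈ (span ℝ (f '' Set.Iio k))ᗮ := by
    apply mem_orthogonal_span'
    rintro u ⟨j, hj, rfl⟩
    have hjk : (j : ℕ) < (k : ℕ) := Set.mem_Iio.mp hj
    rw [real_inner_smul_right, hf j, real_inner_smul_left, hW,
      innerW m i (k : ℕ) hK hjk]
    ring
  have h4 : f k - c • W ∈ span ℝ (f '' Set.Iio k) := by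
    have hsum : ∑ j ∈ Finset.Iio k, f j =
        (Real.sqrt 2)⁻¹ • ((((k : ℕ) : ℝ)) • canE m i +
          ∑ j ∈ Finset.range (k : ℕ), canE m (i + ((j + 1 : ℕ) : Fin m))) := by
      rw [show ∑ j ∈ Finset.Iio k, f j = ∑ t ∈ Finset.range (k : ℕ),
          (Real.sqrt 2)⁻¹ • (canE m i + canE m (i + ((t + 1 : ℕ) : Fin m))) from by
        rw [← sum_Iio_fin k (fun t =>
          (Real.sqrt 2)⁻¹ • (canE m i + canE m (i + ((t + 1 : ℕ) : Fin m))))]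
        exact Finset.sum_congr rfl fun j _ => hf j]
      rw [← Finset.smul_sum, Finset.sum_add_distrib, Finset.sum_const, Finset.card_range]
      module
    have key : f k - c • W = ((((k : ℕ) : ℝ) + 1))⁻¹ • ∑ j ∈ Finset.Iio k, f j := by
      rw [hsum, hf k, hW, hc]
      match_scalars <;> field_simp <;> ring
    rw [key]
    exact Submodule.smul_mem _ _ (Submodule.sum_mem _ fun j hj =>
      subset_span ⟨j, Finset.mem_Iio.mp hj, rfl⟩)
  have hgs : gramSchmidt ℝ f k = c • W := by
    have hsub : gramSchmidt ℝ f k - c • W ∈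
        span ℝ (f '' Set.Iio k) ⊓ (span ℝ (f '' Set.Iio k))ᗮ := by
      constructor
      · have hmem := Submodule.sub_mem _ h4 h2
        have e1 : (f k - c • W) - (f k - gramSchmidt ℝ f k) =
            gramSchmidt ℝ f k - c • W := by abel
        rwa [e1] at hmem
      · exact Submodule.sub_mem _ h1 h3
    rw [Submodule.inf_orthogonal_eq_bot, Submodule.mem_bot, sub_eq_zero] at hsub
    exact hsub
  have hWW := innerWW m i (k : ℕ) hK
  have hX : (0:ℝ) < (((k : ℕ) : ℝ) + 1) * (((k : ℕ) : ℝ) + 2) := by positivity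
  have hnW : ‖W‖ = Real.sqrt ((((k : ℕ) : ℝ) + 1) * (((k : ℕ) : ℝ) + 2)) := by
    rw [norm_eq_sqrt_real_inner, hW, hWW]
  have hXs : Real.sqrt ((((k : ℕ) : ℝ) + 1) * (((k : ℕ) : ℝ) + 2)) ≠ 0 := by
    positivity
  have hnorm : ‖gramSchmidt ℝ f k‖ = c * ‖W‖ := by
    rw [hgs, norm_smul, Real.norm_eq_abs, abs_of_pos hcpos]
  have hA : (Real.sqrt ((((k : ℕ) : ℝ) + 1) + (((k : ℕ) : ℝ) + 1) ^ 2))⁻¹ =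
      (Real.sqrt ((((k : ℕ) : ℝ) + 1) * (((k : ℕ) : ℝ) + 2)))⁻¹ := by
    rw [show (((k : ℕ) : ℝ) + 1) + (((k : ℕ) : ℝ) + 1) ^ 2 =
      (((k : ℕ) : ℝ) + 1) * (((k : ℕ) : ℝ) + 2) by ring]
  have hB : Real.sqrt ((((k : ℕ) + 1 : ℕ) : ℝ) / (((k : ℕ) + 2 : ℕ) : ℝ)) =
      (Real.sqrt ((((k : ℕ) : ℝ) + 1) * (((k : ℕ) : ℝ) + 2)))⁻¹ * (((k : ℕ) : ℝ) + 1) := by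
    push_cast
    rw [Real.sqrt_div (by positivity) _, Real.sqrt_mul (by positivity) _]
    have h3 : Real.sqrt (((k : ℕ) : ℝ) + 1) ^ 2 = ((k : ℕ) : ℝ) + 1 :=
      Real.sq_sqrt (by positivity)
    have hp1 : Real.sqrt (((k : ℕ) : ℝ) + 1) ≠ 0 := by positivity
    have hp2 : Real.sqrt (((k : ℕ) : ℝ) + 2) ≠ 0 := by positivity
    rw [eq_comm, inv_mul_eq_div, div_eq_div_iff (by positivity) hp2, ← mul_assoc, ← sq, h3]
  rw [gramSchmidtNormed, hnorm, hnW, hgs]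
  simp only [RCLike.ofReal_real_eq_id, id]
  calc (c * Real.sqrt ((((k : ℕ) : ℝ) + 1) * (((k : ℕ) : ℝ) + 2)))⁻¹ • (c • W)
      = (Real.sqrt ((((k : ℕ) : ℝ) + 1) * (((k : ℕ) : ℝ) + 2)))⁻¹ • W := by
        rw [smul_smul]
        congr 1
        field_simp
    _ = _ := by
        rw [hA, hB, hW, smul_add, smul_smul]
end

section
/- For every even integer m = 2r ≥ 2, there exists a real m × m(m+1) matrix h satisfying the ROCN conditions (pairwise orthogonal nonzero rows, unit-norm columns) whose columns form a symmetric spanning set of ℂ^m, i.e., the tensor squares of its columns span the m(m+1)/2-dimensional symmetric subspace S(ℂ^m ⊗ ℂ^m). -/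
open TensorProduct Finset

/-- The symmetrization projector on `V ⊗ V`, sending `u ⊗ v` to `(u ⊗ v + v ⊗ u)/2`. -/
noncomputable def symmProj (𝕜 V : Type*) [Field 𝕜] [AddCommGroup V] [Module 𝕜 V] :
    V ⊗[𝕜] V →ₗ[𝕜] V ⊗[𝕜] V :=
  (2 : 𝕜)⁻¹ • (LinearMap.id + (TensorProduct.comm 𝕜 V V).toLinearMap)

namespace Rocn

variable {m : ℕ}

/-- sign used for the off-diagonal columns -/
def sgn (a b : Fin m) : ℝ := if (a : ℕ) < (b : ℕ) then 1 else -1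

lemma sgn_mul_self (a b : Fin m) : sgn a b * sgn a b = 1 := by
  unfold sgn; split <;> norm_num

lemma sgn_swap {a b : Fin m} (h : a ≠ b) : sgn b a = - sgn a b := by
  have h' : (a : ℕ) ≠ (b : ℕ) := fun hh => h (Fin.ext hh)
  unfold sgn
  rcases h'.lt_or_gt with h1 | h1
  · rw [if_neg (by omega), if_pos h1]
  · rw [if_pos h1, if_neg (by omega)]; norm_num

/-- the columns indexed by pairs `(a, b)` with `b < m` -/
noncomputable def cvec (a b : Fin m) (i : Fin m) : ℝ :=
  if a = b then (if i = a then 1 else 0)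
  else ((if i = a then 1 else 0) + sgn a b * (if i = b then 1 else 0)) / Real.sqrt 2

/-- all columns: for `b = last` we use the standard basis vector `e a` -/
noncomputable def col (a : Fin m) (b : Fin (m + 1)) (i : Fin m) : ℝ :=
  if hb : (b : ℕ) < m then cvec a ⟨b, hb⟩ i else if i = a then 1 else 0

/-- the ROCN matrix -/
noncomputable def hmat (i : Fin m) (j : Fin (m * (m + 1))) : ℝ :=
  col (finProdFinEquiv.symm j).1 (finProdFinEquiv.symm j).2 i

lemma hmat_apply (i : Fin m) (p : Fin m × Fin (m + 1)) :
    hmat i (finProdFinEquiv p) = col p.1 p.2 i := by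
  simp [hmat]

lemma col_castSucc (a b : Fin m) (i : Fin m) : col a b.castSucc i = cvec a b i := by
  have hb : ((b.castSucc : Fin (m + 1)) : ℕ) < m := by simp
  rw [col, dif_pos hb]
  have : (⟨((b.castSucc : Fin (m + 1)) : ℕ), hb⟩ : Fin m) = b := by ext; simp
  rw [this]

lemma col_last (a i : Fin m) : col a (Fin.last m) i = if i = a then 1 else 0 := by
  rw [col, dif_neg]; simp

lemma delta_norm (a : Fin m) : ∑ i, (if i = a then (1 : ℝ) else 0) ^ 2 = 1 := by
  have h : ∀ i : Fin m, (if i = a then (1 : ℝ) else 0) ^ 2 = if i = a then 1 else 0 := by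
    intro i; split <;> norm_num
  rw [Finset.sum_congr rfl fun i _ => h i]
  simp

lemma cvec_norm (a b : Fin m) : ∑ i, cvec a b i ^ 2 = 1 := by
  by_cases hab : a = b
  · subst hab
    have h : ∀ i : Fin m, cvec a a i ^ 2 = (if i = a then (1 : ℝ) else 0) ^ 2 := by
      intro i; simp [cvec]
    rw [Finset.sum_congr rfl fun i _ => h i]
    exact delta_norm a
  · have h2 : Real.sqrt 2 ^ 2 = 2 := Real.sq_sqrt (by norm_num)
    have h : ∀ i : Fin m,
        cvec a b i ^ 2 = (if i = a then (1 : ℝ) else 0) / 2 + (if i = b then 1 else 0) / 2 := by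
      intro i
      simp only [cvec, if_neg hab]
      by_cases hia : i = a
      · have hib : ¬ i = b := by rw [hia]; exact hab
        rw [if_pos hia, if_neg hib, div_pow, h2]; ring
      · by_cases hib : i = b
        · rw [if_neg hia, if_pos hib, div_pow, h2]
          linear_combination (sgn_mul_self a b) / 2
        · rw [if_neg hia, if_neg hib, div_pow, h2]; ring
    rw [Finset.sum_congr rfl fun i _ => h i, Finset.sum_add_distrib,
      ← Finset.sum_div, ← Finset.sum_div]
    simp
    norm_num

lemma col_norm (a : Fin m) (b : Fin (m + 1)) : ∑ i, col a b i ^ 2 = 1 := by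
  by_cases hb : (b : ℕ) < m
  · rw [Finset.sum_congr rfl fun i _ => by rw [col, dif_pos hb]]
    exact cvec_norm _ _
  · rw [Finset.sum_congr rfl fun i _ => by rw [col, dif_neg hb]]
    exact delta_norm a

lemma cvec_pair {i k : Fin m} (hik : i ≠ k) (a b : Fin m) :
    cvec a b i * cvec a b k + cvec b a i * cvec b a k = 0 := by
  by_cases hab : a = b
  · subst hab
    simp only [cvec, if_pos rfl]
    by_cases hia : i = a <;> by_cases hka : k = a <;> simp_all
  · have hba : b ≠ a := fun h => hab h.symm
    simp only [cvec, if_neg hab, if_neg hba, sgn_swap hab]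
    rw [div_mul_div_comm, div_mul_div_comm, ← add_div, div_eq_zero_iff]
    left
    by_cases hia : i = a <;> by_cases hib : i = b <;> by_cases hka : k = a <;>
      by_cases hkb : k = b <;> simp_all <;> ring

lemma cvec_orth {i k : Fin m} (hik : i ≠ k) :
    ∑ a : Fin m, ∑ b : Fin m, cvec a b i * cvec a b k = 0 := by
  have hsw : (∑ a : Fin m, ∑ b : Fin m, cvec a b i * cvec a b k)
      = ∑ a : Fin m, ∑ b : Fin m, cvec b a i * cvec b a k := Finset.sum_comm
  have hzero : (∑ a : Fin m, ∑ b : Fin m,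
      (cvec a b i * cvec a b k + cvec b a i * cvec b a k)) = 0 :=
    Finset.sum_eq_zero fun a _ => Finset.sum_eq_zero fun b _ => cvec_pair hik a b
  simp only [Finset.sum_add_distrib] at hzero
  linarith [hsw, hzero]

lemma hmat_orth (i k : Fin m) :
    ∑ j, hmat i j * hmat k j = if i = k then ∑ j, (hmat i j) ^ 2 else 0 := by
  by_cases hik : i = k
  · subst hik
    rw [if_pos rfl]
    exact Finset.sum_congr rfl fun j _ => (sq (hmat i j)).symm
  · rw [if_neg hik]
    rw [← Equiv.sum_comp finProdFinEquiv (fun j => hmat i j * hmat k j)]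
    simp only [hmat_apply]
    rw [Fintype.sum_prod_type]
    have hb : ∀ a : Fin m, (∑ b : Fin (m + 1), col a b i * col a b k)
        = (∑ b : Fin m, cvec a b i * cvec a b k)
          + (if i = a then (1 : ℝ) else 0) * (if k = a then 1 else 0) := by
      intro a
      rw [Fin.sum_univ_castSucc]
      congr 1
      · exact Finset.sum_congr rfl fun b _ => by rw [col_castSucc, col_castSucc]
      · rw [col_last, col_last]
    rw [Finset.sum_congr rfl fun a _ => hb a, Finset.sum_add_distrib, cvec_orth hik]
    have h : ∀ a : Fin m, (if i = a then (1 : ℝ) else 0) * (if k = a then 1 else 0) = 0 := by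
      intro a; by_cases hia : i = a <;> by_cases hka : k = a <;> simp_all
    rw [Finset.sum_congr rfl fun a _ => h a]
    simp

lemma hmat_colnorm (j : Fin (m * (m + 1))) : ∑ i, (hmat i j) ^ 2 = 1 := by
  obtain ⟨p, rfl⟩ := finProdFinEquiv.surjective j
  rw [Finset.sum_congr rfl fun i _ => by rw [hmat_apply]]
  exact col_norm p.1 p.2

/-! ### Complex columns and the spanning property -/

/-- standard basis vectors of `ℂ^m` -/
def E (a : Fin m) : Fin m → ℂ := fun i => if i = a then 1 else 0

/-- the columns as complex vectors -/
noncomputable def colC (p : Fin m × Fin (m + 1)) : Fin m → ℂ := fun i => ((col p.1 p.2 i : ℝ) : ℂ)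

lemma colC_last (a : Fin m) : colC (a, Fin.last m) = E a := by
  funext i
  simp [colC, col_last, E, apply_ite (fun x : ℝ => (x : ℂ))]

lemma colC_off {a b : Fin m} (hab : a ≠ b) :
    colC (a, b.castSucc) = ((Real.sqrt 2 : ℝ) : ℂ)⁻¹ • (E a + ((sgn a b : ℝ) : ℂ) • E b) := by
  funext i
  simp only [colC, col_castSucc, cvec, if_neg hab, E, Pi.smul_apply, Pi.add_apply,
    smul_eq_mul, Complex.ofReal_div, Complex.ofReal_add, Complex.ofReal_mul,
    apply_ite (fun x : ℝ => (x : ℂ)), Complex.ofReal_one, Complex.ofReal_zero]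
  ring

lemma key {M : Type*} [AddCommGroup M] [Module ℂ M] {t : ℂ} (ht : t * t = 1) (A B C D : M) :
    B + C = ((2 : ℂ) * t) • ((2 : ℂ)⁻¹ • (A + t • B + t • C + (t * t) • D))
      - t • A - t • D := by
  rw [ht, one_smul, smul_smul, show (2 : ℂ) * t * (2 : ℂ)⁻¹ = t by ring]
  simp only [smul_add, smul_smul, ht, one_smul]
  abel

lemma span_eq (m : ℕ) :
    Submodule.span ℂ
        (Set.range fun j : Fin (m * (m + 1)) =>
          (fun i => (hmat i j : ℂ)) ⊗ₜ[ℂ] (fun i => (hmat i j : ℂ))) =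
      LinearMap.range (symmProj ℂ (Fin m → ℂ)) := by
  have hrange : (Set.range fun j : Fin (m * (m + 1)) =>
      (fun i => ((hmat i j : ℝ) : ℂ)) ⊗ₜ[ℂ] (fun i => ((hmat i j : ℝ) : ℂ)))
      = Set.range (fun p : Fin m × Fin (m + 1) => colC p ⊗ₜ[ℂ] colC p) := by
    rw [show (fun j : Fin (m * (m + 1)) =>
        (fun i => ((hmat i j : ℝ) : ℂ)) ⊗ₜ[ℂ] (fun i => ((hmat i j : ℝ) : ℂ)))
        = (fun p : Fin m × Fin (m + 1) => colC p ⊗ₜ[ℂ] colC p) ∘ finProdFinEquiv.symm from rfl]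
    exact Function.Surjective.range_comp finProdFinEquiv.symm.surjective _
  rw [hrange]
  set W := Submodule.span ℂ (Set.range fun p : Fin m × Fin (m + 1) => colC p ⊗ₜ[ℂ] colC p)
    with hW
  set P := symmProj ℂ (Fin m → ℂ) with hP
  have hPtmul : ∀ v : Fin m → ℂ, P (v ⊗ₜ[ℂ] v) = v ⊗ₜ[ℂ] v := by
    intro v
    simp only [hP, symmProj, LinearMap.smul_apply, LinearMap.add_apply, LinearMap.id_apply,
      LinearEquiv.coe_coe, comm_tmul]
    rw [← two_smul ℂ, smul_smul, inv_mul_cancel₀ (two_ne_zero), one_smul]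
  have hdiag : ∀ a : Fin m, E a ⊗ₜ[ℂ] E a ∈ W := by
    intro a
    apply Submodule.subset_span
    refine ⟨(a, Fin.last m), ?_⟩
    show colC (a, Fin.last m) ⊗ₜ[ℂ] colC (a, Fin.last m) = E a ⊗ₜ[ℂ] E a
    rw [colC_last]
  have hsym : ∀ a b : Fin m, E a ⊗ₜ[ℂ] E b + E b ⊗ₜ[ℂ] E a ∈ W := by
    intro a b
    by_cases hab : a = b
    · subst hab; exact add_mem (hdiag a) (hdiag a)
    · set t : ℂ := ((sgn a b : ℝ) : ℂ) with ht
      have hts : t * t = 1 := by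
        rw [ht, ← Complex.ofReal_mul, sgn_mul_self]; norm_num
      have hc : ((Real.sqrt 2 : ℝ) : ℂ)⁻¹ * ((Real.sqrt 2 : ℝ) : ℂ)⁻¹ = (2 : ℂ)⁻¹ := by
        rw [← mul_inv, ← Complex.ofReal_mul, Real.mul_self_sqrt (by norm_num)]
        norm_num
      have hu : colC (a, b.castSucc) ⊗ₜ[ℂ] colC (a, b.castSucc) ∈ W :=
        Submodule.subset_span ⟨(a, b.castSucc), rfl⟩
      have hu_eq : colC (a, b.castSucc) ⊗ₜ[ℂ] colC (a, b.castSucc)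
          = (2 : ℂ)⁻¹ • (E a ⊗ₜ[ℂ] E a + t • (E a ⊗ₜ[ℂ] E b) + t • (E b ⊗ₜ[ℂ] E a)
              + (t * t) • (E b ⊗ₜ[ℂ] E b)) := by
        rw [colC_off hab, ← ht]
        rw [tmul_smul, ← smul_tmul', smul_smul, hc]
        congr 1
        simp only [tmul_add, add_tmul, tmul_smul, ← smul_tmul', smul_add, smul_smul]
        abel
      have hid : E a ⊗ₜ[ℂ] E b + E b ⊗ₜ[ℂ] E a
          = ((2 : ℂ) * t) • (colC (a, b.castSucc) ⊗ₜ[ℂ] colC (a, b.castSucc))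
            - t • (E a ⊗ₜ[ℂ] E a) - t • (E b ⊗ₜ[ℂ] E b) := by
        rw [hu_eq]
        exact key hts _ _ _ _
      rw [hid]
      exact sub_mem (sub_mem (Submodule.smul_mem _ _ hu) (Submodule.smul_mem _ _ (hdiag a)))
        (Submodule.smul_mem _ _ (hdiag b))
  have htop : Submodule.span ℂ
      (Set.range fun p : Fin m × Fin m => (E p.1) ⊗ₜ[ℂ] (E p.2)) = ⊤ := by
    have hbe : ⇑((Pi.basisFun ℂ (Fin m)).tensorProduct (Pi.basisFun ℂ (Fin m)))
        = fun p : Fin m × Fin m => (E p.1) ⊗ₜ[ℂ] (E p.2) := by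
      funext p
      rw [show ((Pi.basisFun ℂ (Fin m)).tensorProduct (Pi.basisFun ℂ (Fin m))) p
          = (Pi.basisFun ℂ (Fin m)) p.1 ⊗ₜ[ℂ] (Pi.basisFun ℂ (Fin m)) p.2 from
        Module.Basis.tensorProduct_apply _ _ p.1 p.2]
      congr 1 <;> · funext i; simp [E, Pi.single_apply]
    rw [← hbe]
    exact Module.Basis.span_eq _
  apply le_antisymm
  · rw [Submodule.span_le]
    rintro x ⟨p, rfl⟩
    exact ⟨colC p ⊗ₜ[ℂ] colC p, hPtmul _⟩
  · rw [LinearMap.range_eq_map, ← htop, Submodule.map_span, Submodule.span_le]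
    rintro x ⟨y, ⟨p, rfl⟩, rfl⟩
    have hPE : P (E p.1 ⊗ₜ[ℂ] E p.2)
        = (2 : ℂ)⁻¹ • (E p.1 ⊗ₜ[ℂ] E p.2 + E p.2 ⊗ₜ[ℂ] E p.1) := by
      simp only [hP, symmProj, LinearMap.smul_apply, LinearMap.add_apply, LinearMap.id_apply,
        LinearEquiv.coe_coe, comm_tmul]
    rw [hPE]
    exact Submodule.smul_mem _ _ (hsym p.1 p.2)

end Rocn

/-- For every even `m = 2r ≥ 2` there is a real `m × m(m+1)` ROCN matrix (pairwise
orthogonal nonzero rows, unit-norm columns) whose columns form a symmetric spanning set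
of `ℂ^m`: the tensor squares of its columns span the symmetric subspace. -/
theorem exists_rocn_symmetric_spanning (r : ℕ) (hr : 1 ≤ r) :
    ∃ h : Matrix (Fin (2 * r)) (Fin (2 * r * (2 * r + 1))) ℝ,
      (∀ i k, ∑ j, h i j * h k j = if i = k then ∑ j, (h i j) ^ 2 else 0) ∧
      (∀ i, ∃ j, h i j ≠ 0) ∧
      (∀ j, ∑ i, (h i j) ^ 2 = 1) ∧
      Submodule.span ℂ
          (Set.range fun j : Fin (2 * r * (2 * r + 1)) =>
            (fun i => (h i j : ℂ)) ⊗ₜ[ℂ] (fun i => (h i j : ℂ))) =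
        LinearMap.range (symmProj ℂ (Fin (2 * r) → ℂ)) := by
  refine ⟨Rocn.hmat, fun i k => Rocn.hmat_orth i k,
    fun i => ⟨finProdFinEquiv (i, Fin.last (2 * r)), ?_⟩,
    fun j => Rocn.hmat_colnorm j, Rocn.span_eq (2 * r)⟩
  rw [Rocn.hmat_apply]
  simp [Rocn.col_last]
end

section
/- Let {A_i}_{i=1}^m be pairwise anticommuting self-adjoint involutions on ℂ^d ({A_i,A_k} = 2δ_{ik}I), h an m×n ROCN matrix, B_j = Σ_i h_{ij}A_i^T, and |Φ_d⟩ = (1/√d)Σ_{i=1}^d |i⟩⊗|i⟩ the maximally entangled state. Then ⟨Φ_d| Σ_{j=1}^n Σ_{i=1}^m h_{ij} (A_i ⊗ B_j) |Φ_d⟩ = n. -/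
open Finset Matrix Kronecker

/-- The maximally entangled state `|Φ_d⟩ = (1/√d) Σ_i |i⟩⊗|i⟩` as a vector of
`ℂ^d ⊗ ℂ^d ≅ ℂ^(d×d)`. -/
noncomputable def maxEnt (d : ℕ) : Fin d × Fin d → ℂ :=
  fun p => ((Real.sqrt d : ℝ) : ℂ)⁻¹ * (if p.1 = p.2 then 1 else 0)

/-- `⟨Φ_d| X ⊗ Y |Φ_d⟩ = (1/d) Tr(X Yᵀ)`. -/
lemma maxEnt_inner_kron (d : ℕ) (X Y : Matrix (Fin d) (Fin d) ℂ) :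
    star (maxEnt d) ⬝ᵥ ((X ⊗ₖ Y).mulVec (maxEnt d)) = (d : ℂ)⁻¹ * (X * Yᵀ).trace := by
  have hc : star (((Real.sqrt d : ℝ) : ℂ)⁻¹) = ((Real.sqrt d : ℝ) : ℂ)⁻¹ := by
    simp [Complex.star_def]
  have hsq : ((Real.sqrt d : ℝ) : ℂ)⁻¹ * ((Real.sqrt d : ℝ) : ℂ)⁻¹ = (d : ℂ)⁻¹ := by
    have hr : ((Real.sqrt d)⁻¹ * (Real.sqrt d)⁻¹ : ℝ) = (d:ℝ)⁻¹ := by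
      rw [← mul_inv, Real.mul_self_sqrt (by positivity)]
    have := congrArg (Complex.ofReal) hr
    push_cast at this
    exact this
  simp only [dotProduct, mulVec, maxEnt, Pi.star_apply, star_mul', hc,
    apply_ite (star : ℂ → ℂ), star_one, star_zero, kroneckerMap_apply, trace,
    Matrix.diag, Matrix.mul_apply, transpose_apply, dotProduct]
  rw [Fintype.sum_prod_type]
  simp only [mul_ite, mul_one, mul_zero, ite_mul, zero_mul, one_mul]
  simp only [Fintype.sum_prod_type, Finset.sum_ite_eq, Finset.mem_univ, if_true,
    Finset.mul_sum]
  refine Finset.sum_congr rfl fun a _ => Finset.sum_congr rfl fun b _ => ?_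
  rw [← hsq]; ring

/-- The quadratic form `M ↦ ⟨v, M w⟩` as an additive monoid hom in the matrix. -/
lemma dot_mulVec_sum {ι : Type*} (s : Finset ι) {p : Type*} [Fintype p] [DecidableEq p]
    (v w : p → ℂ) (M : ι → Matrix p p ℂ) :
    star v ⬝ᵥ (∑ i ∈ s, M i).mulVec w = ∑ i ∈ s, star v ⬝ᵥ (M i).mulVec w := by
  classical
  induction s using Finset.induction_on with
  | empty => simp [Matrix.mulVec, dotProduct]
  | insert _ _ hx ih =>
      rw [Finset.sum_insert hx, Finset.sum_insert hx, Matrix.add_mulVec,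
        dotProduct_add, ih]

/-- For pairwise anticommuting self-adjoint involutions `A_i` on `ℂ^d`, an `m×n` ROCN
matrix `h`, and `B_j = Σ_i h_{ij} A_iᵀ`, the Bell operator
`Σ_{ij} h_{ij} A_i ⊗ B_j` has expectation value `n` on the maximally entangled state
`|Φ_d⟩`. -/
theorem bell_value_on_maximally_entangled (m n d : ℕ) (hd : 0 < d) (hmn : m ≤ n)
    (A : Fin m → Matrix (Fin d) (Fin d) ℂ)
    (hA : ∀ i, (A i).IsHermitian)
    (hAC : ∀ i k, A i * A k + A k * A i = if i = k then (2 : ℂ) • 1 else 0)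
    (h : Matrix (Fin m) (Fin n) ℝ)
    (hrow : ∀ i k : Fin m, ∑ j, h i j * h k j =
      if i = k then ∑ j, (h i j) ^ 2 else 0)
    (hne : ∀ i : Fin m, ∃ j, h i j ≠ 0)
    (hcol : ∀ j : Fin n, ∑ i, (h i j) ^ 2 = 1)
    (B : Fin n → Matrix (Fin d) (Fin d) ℂ)
    (hB : ∀ j, B j = ∑ i, (h i j : ℂ) • (A i)ᵀ) :
    star (maxEnt d) ⬝ᵥ
        ((∑ j, ∑ i, (h i j : ℂ) • (A i ⊗ₖ B j)).mulVec (maxEnt d)) = (n : ℂ) := by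
  have hd' : (d : ℂ) ≠ 0 := Nat.cast_ne_zero.mpr hd.ne'
  -- trace of products of the anticommuting involutions
  have htr : ∀ i k, (A i * A k).trace = if i = k then (d : ℂ) else 0 := by
    intro i k
    have := congrArg Matrix.trace (hAC i k)
    rw [trace_add, trace_mul_comm (A k) (A i)] at this
    have h2 : (2:ℂ) * (A i * A k).trace = if i = k then (2:ℂ) * d else 0 := by
      rw [two_mul, this]
      split <;> simp [trace_smul, trace_one, two_mul]
    rcases eq_or_ne i k with rfl | hik
    · simp only [if_pos rfl] at h2 ⊢
      exact mul_left_cancel₀ (two_ne_zero (α := ℂ)) h2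
    · simp only [if_neg hik] at h2 ⊢
      exact (mul_eq_zero.mp h2).resolve_left two_ne_zero
  -- expand by linearity
  rw [dot_mulVec_sum]
  have hterm : ∀ j : Fin n,
      star (maxEnt d) ⬝ᵥ (∑ i, (h i j : ℂ) • (A i ⊗ₖ B j)).mulVec (maxEnt d)
        = ∑ i, (h i j : ℂ) * (h i j : ℂ) := by
    intro j
    rw [dot_mulVec_sum]
    refine Finset.sum_congr rfl fun i _ => ?_
    rw [Matrix.smul_mulVec, dotProduct_smul, smul_eq_mul]
    congr 1
    rw [maxEnt_inner_kron d, hB j]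
    have ht : (∑ k, (h k j : ℂ) • (A k)ᵀ)ᵀ = ∑ k, (h k j : ℂ) • A k := by
      simp [transpose_sum, transpose_smul]
    rw [ht, Finset.mul_sum, trace_sum]
    simp only [Matrix.mul_smul, trace_smul, htr, smul_eq_mul, mul_ite, mul_zero]
    rw [Finset.sum_ite_eq Finset.univ i (fun k => (h k j : ℂ) * (d : ℂ))]
    simp only [Finset.mem_univ, if_true]
    field_simp
  simp only [hterm]
  have hcol' : ∀ j : Fin n, ∑ i, (h i j : ℂ) * (h i j : ℂ) = 1 := by
    intro j
    have := congrArg (Complex.ofReal) (hcol j)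
    push_cast at this
    simpa [pow_two] using this
  simp [hcol']
end
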